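/- The graph K_{1,1,3} admits no proper square-contact representation. -/

import Mathlib

open Set

structure AxSquare where
  x : ℝ
  y : ℝ
  side : ℝ
  side_pos : 0 < side

namespace AxSquare
def left (S : AxSquare) : ℝ := S.x
def right (S : AxSquare) : ℝ := S.x + S.side
def bottom (S : AxSquare) : ℝ := S.y
def top (S : AxSquare) : ℝ := S.y + S.side
/-- The square as a subset of the plane. -/
def toSet (S : AxSquare) : Set (ℝ × ℝ) :=
  Set.Icc S.x (S.x + S.side) ×ˢ Set.Icc S.y (S.y + S.side)
end AxSquare

/-- A proper square-contact representation of `G`, restricted to the vertex set `A`. -/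
def IsSCROn {V : Type} (G : SimpleGraph V) (A : Set V) (Sq : V → AxSquare) : Prop :=
  (∀ u ∈ A, ∀ v ∈ A, u ≠ v → interior (Sq u).toSet ∩ interior (Sq v).toSet = ∅) ∧
  (∀ u ∈ A, ∀ v ∈ A, G.Adj u v → ((Sq u).toSet ∩ (Sq v).toSet).Infinite) ∧
  (∀ u ∈ A, ∀ v ∈ A, u ≠ v → ¬ G.Adj u v → (Sq u).toSet ∩ (Sq v).toSet = ∅)

/-- `G` admits a proper square-contact representation. -/
def HasSCR {V : Type} (G : SimpleGraph V) : Prop :=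
  ∃ Sq : V → AxSquare, IsSCROn G Set.univ Sq

/-! ### `K_{1,1,3}` and `K_{1,1,3}`-freeness -/

/-- The complete tripartite graph `K_{1,1,3}`: vertices `0, 1` are the two adjacent
vertices, and `2, 3, 4` are pairwise non-adjacent, each adjacent to `0` and `1`. -/
def K113 : SimpleGraph (Fin 5) where
  Adj u v := u ≠ v ∧ ((u : ℕ) < 2 ∨ (v : ℕ) < 2)
  symm := ⟨fun u v h => ⟨h.1.symm, h.2.symm⟩⟩
  loopless := ⟨fun u h => h.1 rfl⟩

/-- `G` contains no subgraph isomorphic to `K_{1,1,3}`. -/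
def K113Free {V : Type} (G : SimpleGraph V) : Prop :=
  ¬ ∃ f : Fin 5 → V, Function.Injective f ∧ ∀ u v, K113.Adj u v → G.Adj (f u) (f v)

namespace SCRAux

def Ct (S T : AxSquare) : Prop :=
  (max S.x T.x = min (S.x + S.side) (T.x + T.side) ∧
     max S.y T.y < min (S.y + S.side) (T.y + T.side)) ∨
  (max S.x T.x < min (S.x + S.side) (T.x + T.side) ∧
     max S.y T.y = min (S.y + S.side) (T.y + T.side))

def Dj (S T : AxSquare) : Prop :=
  min (S.x + S.side) (T.x + T.side) < max S.x T.x ∨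
  min (S.y + S.side) (T.y + T.side) < max S.y T.y

def tr (S : AxSquare) : AxSquare := ⟨S.y, S.x, S.side, S.side_pos⟩

lemma ct_tr {S T : AxSquare} (h : Ct S T) : Ct (tr S) (tr T) := by
  rcases h with ⟨h1, h2⟩ | ⟨h1, h2⟩
  exacts [Or.inr ⟨h2, h1⟩, Or.inl ⟨h2, h1⟩]

lemma dj_tr {S T : AxSquare} (h : Dj S T) : Dj (tr S) (tr T) := h.symm

lemma inter_eq (S T : AxSquare) :
    S.toSet ∩ T.toSet =
      Icc (max S.x T.x) (min (S.x + S.side) (T.x + T.side)) ×ˢ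
      Icc (max S.y T.y) (min (S.y + S.side) (T.y + T.side)) := by
  simp only [AxSquare.toSet, Set.prod_inter_prod, Icc_inter_Icc]

lemma ct_of (S T : AxSquare)
    (hint : interior S.toSet ∩ interior T.toSet = ∅)
    (hinf : (S.toSet ∩ T.toSet).Infinite) : Ct S T := by
  have hIS : interior S.toSet = Ioo S.x (S.x + S.side) ×ˢ Ioo S.y (S.y + S.side) := by
    simp only [AxSquare.toSet, interior_prod_eq, interior_Icc]
  have hIT : interior T.toSet = Ioo T.x (T.x + T.side) ×ˢ Ioo T.y (T.y + T.side) := by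
    simp only [AxSquare.toSet, interior_prod_eq, interior_Icc]
  rw [hIS, hIT, Set.prod_inter_prod] at hint
  have hint' : Ioo (max S.x T.x) (min (S.x + S.side) (T.x + T.side)) ×ˢ
      Ioo (max S.y T.y) (min (S.y + S.side) (T.y + T.side)) = ∅ := by
    simpa only [Ioo_inter_Ioo] using hint
  rw [inter_eq] at hinf
  obtain ⟨⟨p, q⟩, hpq⟩ := hinf.nonempty
  rw [Set.mem_prod] at hpq
  have hab : max S.x T.x ≤ min (S.x + S.side) (T.x + T.side) := le_trans hpq.1.1 hpq.1.2
  have hcd : max S.y T.y ≤ min (S.y + S.side) (T.y + T.side) := le_trans hpq.2.1 hpq.2.2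
  have hor : min (S.x + S.side) (T.x + T.side) ≤ max S.x T.x ∨
      min (S.y + S.side) (T.y + T.side) ≤ max S.y T.y := by
    rcases Set.prod_eq_empty_iff.mp hint' with h | h
    · exact Or.inl (le_of_not_gt fun hc => (Set.nonempty_Ioo.2 hc).ne_empty h)
    · exact Or.inr (le_of_not_gt fun hc => (Set.nonempty_Ioo.2 hc).ne_empty h)
  have hne : ¬ (max S.x T.x = min (S.x + S.side) (T.x + T.side) ∧
      max S.y T.y = min (S.y + S.side) (T.y + T.side)) := by
    rintro ⟨h1, h2⟩
    apply hinf
    rw [← h1, ← h2, Icc_self, Icc_self]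
    exact (Set.finite_singleton _).prod (Set.finite_singleton _)
  rcases hor with h | h
  · exact Or.inl ⟨le_antisymm hab h,
      lt_of_le_of_ne hcd fun hcd' => hne ⟨le_antisymm hab h, hcd'⟩⟩
  · exact Or.inr ⟨lt_of_le_of_ne hab fun hab' => hne ⟨hab', le_antisymm hcd h⟩,
      le_antisymm hcd h⟩

lemma dj_of (S T : AxSquare) (h : S.toSet ∩ T.toSet = ∅) : Dj S T := by
  rw [inter_eq] at h
  rcases Set.prod_eq_empty_iff.mp h with h | h
  · exact Or.inl (not_le.mp (Set.Icc_eq_empty_iff.mp h))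
  · exact Or.inr (not_le.mp (Set.Icc_eq_empty_iff.mp h))

lemma eq_cases {a b s t : ℝ} (hs : 0 < s) (ht : 0 < t)
    (h : max a b = min (a + s) (b + t)) : a + s = b ∨ b + t = a := by
  rcases max_cases a b with ⟨hm, _⟩ | ⟨hm, _⟩ <;>
  rcases min_cases (a + s) (b + t) with ⟨hn, _⟩ | ⟨hn, _⟩ <;>
  rw [hm, hn] at h <;>
  first
    | (left; linarith)
    | (right; linarith)
    | (exfalso; linarith)

lemma lt_cases {p r q s : ℝ} (hpr : p ≤ r) (hqs : q ≤ s)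
    (h : min r s < max p q) : r < q ∨ s < p := by
  rcases max_cases p q with ⟨hm, _⟩ | ⟨hm, _⟩ <;>
  rcases min_cases r s with ⟨hn, _⟩ | ⟨hn, _⟩ <;>
  rw [hm, hn] at h <;>
  first
    | (left; linarith)
    | (right; linarith)
    | (exfalso; linarith)

lemma ct_le {S T : AxSquare} (h : Ct S T) :
    max S.x T.x ≤ min (S.x + S.side) (T.x + T.side) ∧
    max S.y T.y ≤ min (S.y + S.side) (T.y + T.side) := by
  rcases h with ⟨h1, h2⟩ | ⟨h1, h2⟩
  exacts [⟨le_of_eq h1, le_of_lt h2⟩, ⟨le_of_lt h1, le_of_eq h2⟩]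

/-- Key step: the "middle" square `M` leads to a contradiction. -/
lemma mid (A B M P Q : AxSquare) (hAB : A.x + A.side = B.x)
    (hAM : Ct A M) (hBM : Ct B M)
    (hAP : Ct A P) (hAQ : Ct A Q) (hBP : Ct B P) (hBQ : Ct B Q)
    (hPM : P.y + P.side < M.y) (hMQ : M.y + M.side < Q.y) : False := by
  have hAy : A.y ≤ P.y + P.side :=
    le_trans (le_max_left _ _) ((ct_le hAP).2.trans (min_le_right _ _))
  have hAt : Q.y ≤ A.y + A.side :=
    le_trans (le_max_right _ _) ((ct_le hAQ).2.trans (min_le_left _ _))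
  have hBy : B.y ≤ P.y + P.side :=
    le_trans (le_max_left _ _) ((ct_le hBP).2.trans (min_le_right _ _))
  have hBt : Q.y ≤ B.y + B.side :=
    le_trans (le_max_right _ _) ((ct_le hBQ).2.trans (min_le_left _ _))
  have hA1 : A.y < M.y := lt_of_le_of_lt hAy hPM
  have hA2 : M.y + M.side < A.y + A.side := lt_of_lt_of_le hMQ hAt
  have hB1 : B.y < M.y := lt_of_le_of_lt hBy hPM
  have hB2 : M.y + M.side < B.y + B.side := lt_of_lt_of_le hMQ hBt
  have hxA : A.x + A.side = M.x ∨ M.x + M.side = A.x := by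
    rcases hAM with ⟨h1, _⟩ | ⟨_, h2⟩
    · exact eq_cases A.side_pos M.side_pos h1
    · rw [max_eq_right hA1.le, min_eq_right hA2.le] at h2
      exact absurd h2 (by have := M.side_pos; intro hc; linarith)
  have hxB : B.x + B.side = M.x ∨ M.x + M.side = B.x := by
    rcases hBM with ⟨h1, _⟩ | ⟨_, h2⟩
    · exact eq_cases B.side_pos M.side_pos h1
    · rw [max_eq_right hB1.le, min_eq_right hB2.le] at h2
      exact absurd h2 (by have := M.side_pos; intro hc; linarith)
  have := A.side_pos; have := B.side_pos; have := M.side_pos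
  rcases hxA with h | h <;> rcases hxB with h' | h' <;> linarith

/-- Core contradiction: vertical contact of `A` and `B`, three mutually disjoint
squares each in contact with both. -/
lemma core (A B C1 C2 C3 : AxSquare) (hAB : A.x + A.side = B.x)
    (hA1 : Ct A C1) (hA2 : Ct A C2) (hA3 : Ct A C3)
    (hB1 : Ct B C1) (hB2 : Ct B C2) (hB3 : Ct B C3)
    (h12 : Dj C1 C2) (h13 : Dj C1 C3) (h23 : Dj C2 C3) : False := by
  have hl : ∀ (C : AxSquare), Ct A C → Ct B C → C.x ≤ B.x ∧ B.x ≤ C.x + C.side := by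
    intro C hA hB
    constructor
    · have h' : C.x ≤ A.x + A.side :=
        le_trans (le_max_right _ _) ((ct_le hA).1.trans (min_le_left _ _))
      linarith
    · exact le_trans (le_max_left _ _) ((ct_le hB).1.trans (min_le_right _ _))
  obtain ⟨h1l, h1r⟩ := hl C1 hA1 hB1
  obtain ⟨h2l, h2r⟩ := hl C2 hA2 hB2
  obtain ⟨h3l, h3r⟩ := hl C3 hA3 hB3
  have ydj : ∀ (C D : AxSquare), Dj C D → C.x ≤ B.x → B.x ≤ C.x + C.side →
      D.x ≤ B.x → B.x ≤ D.x + D.side →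
      C.y + C.side < D.y ∨ D.y + D.side < C.y := by
    intro C D hdj hc1 hc2 hd1 hd2
    rcases hdj with h | h
    · exfalso
      rcases max_cases C.x D.x with ⟨hm, _⟩ | ⟨hm, _⟩ <;>
      rcases min_cases (C.x + C.side) (D.x + D.side) with ⟨hn, _⟩ | ⟨hn, _⟩ <;>
      rw [hm, hn] at h <;> linarith
    · exact lt_cases (by linarith [C.side_pos]) (by linarith [D.side_pos]) h
  have o12 := ydj C1 C2 h12 h1l h1r h2l h2r
  have o13 := ydj C1 C3 h13 h1l h1r h3l h3r
  have o23 := ydj C2 C3 h23 h2l h2r h3l h3r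
  have s1 := C1.side_pos; have s2 := C2.side_pos; have s3 := C3.side_pos
  rcases o12 with d12 | d21 <;> rcases o13 with d13 | d31 <;> rcases o23 with d23 | d32
  · exact mid A B C2 C1 C3 hAB hA2 hB2 hA1 hA3 hB1 hB3 d12 d23
  · exact mid A B C3 C1 C2 hAB hA3 hB3 hA1 hA2 hB1 hB2 d13 d32
  · linarith
  · exact mid A B C1 C3 C2 hAB hA1 hB1 hA3 hA2 hB3 hB2 d31 d12
  · exact mid A B C1 C2 C3 hAB hA1 hB1 hA2 hA3 hB2 hB3 d21 d13
  · linarith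
  · exact mid A B C3 C2 C1 hAB hA3 hB3 hA2 hA1 hB2 hB1 d23 d31
  · exact mid A B C2 C3 C1 hAB hA2 hB2 hA3 hA1 hB3 hB1 d32 d21

end SCRAux

open SCRAux in
/-- `K_{1,1,3}` admits no proper square-contact representation. -/
theorem K113_not_hasSCR : ¬ HasSCR K113 := by
  rintro ⟨Sq, hSCR⟩
  obtain ⟨hdis, hadj, hnadj⟩ := hSCR
  have ct : ∀ u v : Fin 5, K113.Adj u v → Ct (Sq u) (Sq v) := by
    intro u v h
    exact ct_of _ _ (hdis u (mem_univ u) v (mem_univ v) h.1)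
      (hadj u (mem_univ u) v (mem_univ v) h)
  have dj : ∀ u v : Fin 5, u ≠ v → ¬ K113.Adj u v → Dj (Sq u) (Sq v) := by
    intro u v h h'
    exact dj_of _ _ (hnadj u (mem_univ u) v (mem_univ v) h h')
  have hAB := ct 0 1 ⟨by decide, Or.inl (by decide)⟩
  have hA2 := ct 0 2 ⟨by decide, Or.inl (by decide)⟩
  have hA3 := ct 0 3 ⟨by decide, Or.inl (by decide)⟩
  have hA4 := ct 0 4 ⟨by decide, Or.inl (by decide)⟩
  have hB2 := ct 1 2 ⟨by decide, Or.inl (by decide)⟩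
  have hB3 := ct 1 3 ⟨by decide, Or.inl (by decide)⟩
  have hB4 := ct 1 4 ⟨by decide, Or.inl (by decide)⟩
  have h23 := dj 2 3 (by decide) (fun h => absurd h.2 (by decide))
  have h24 := dj 2 4 (by decide) (fun h => absurd h.2 (by decide))
  have h34 := dj 3 4 (by decide) (fun h => absurd h.2 (by decide))
  rcases hAB with ⟨hx, _⟩ | ⟨_, hy⟩
  · rcases eq_cases (Sq 0).side_pos (Sq 1).side_pos hx with h | h
    · exact core (Sq 0) (Sq 1) (Sq 2) (Sq 3) (Sq 4) h hA2 hA3 hA4 hB2 hB3 hB4 h23 h24 h34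
    · exact core (Sq 1) (Sq 0) (Sq 2) (Sq 3) (Sq 4) h hB2 hB3 hB4 hA2 hA3 hA4 h23 h24 h34
  · rcases eq_cases (Sq 0).side_pos (Sq 1).side_pos hy with h | h
    · exact core (tr (Sq 0)) (tr (Sq 1)) (tr (Sq 2)) (tr (Sq 3)) (tr (Sq 4)) h
        (ct_tr hA2) (ct_tr hA3) (ct_tr hA4) (ct_tr hB2) (ct_tr hB3) (ct_tr hB4)
        (dj_tr h23) (dj_tr h24) (dj_tr h34)
    · exact core (tr (Sq 1)) (tr (Sq 0)) (tr (Sq 2)) (tr (Sq 3)) (tr (Sq 4)) h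
        (ct_tr hB2) (ct_tr hB3) (ct_tr hB4) (ct_tr hA2) (ct_tr hA3) (ct_tr hA4)
        (dj_tr h23) (dj_tr h24) (dj_tr h34)
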